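/- Let H be a complex Hilbert space, ω₀ ∈ ℂ, and let S be a function from a neighborhood W of ω₀ to the bounded linear operators on H that is holomorphic on W. Suppose there exist a bounded operator T on H and a holomorphic function Q : W → L(H) such that for every ω ∈ W ∖ {ω₀} the operator S(ω) has a bounded inverse with S(ω)⁻¹ = (ω − ω₀)⁻¹ T + Q(ω). Then: (i) S(ω₀) ∘ T = 0 and T ∘ S(ω₀) = 0, so range(T) ⊆ ker S(ω₀) and range S(ω₀) ⊆ ker T; and (ii) if moreover ker S(ω₀) is the one-dimensional span of a nonzero vector φ and range S(ω₀) equals the orthogonal complement {φ}^⊥, then there exists a constant C ∈ ℂ such that T(f) = C ⟨f, φ⟩ φ for all f ∈ H. -/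

import Mathlib

open scoped Topology

/-- Let `H` be a complex Hilbert space, `ω₀ ∈ ℂ`, and `S` a function from
a neighborhood `W` of `ω₀` to the bounded operators on `H`, holomorphic on `W`. Suppose
there are a bounded operator `T` and a holomorphic `Q : W → L(H)` such that for every
`ω ∈ W ∖ {ω₀}` the operator `S ω` has the bounded two-sided inverse
`S(ω)⁻¹ = (ω - ω₀)⁻¹ T + Q(ω)`. Then:
(i) `S(ω₀) ∘ T = 0` and `T ∘ S(ω₀) = 0`, so `range T ⊆ ker S(ω₀)` and
`range S(ω₀) ⊆ ker T`; and
(ii) if moreover `ker S(ω₀)` is the span of a nonzero vector `φ` and `range S(ω₀)` is the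
orthogonal complement `{φ}^⊥`, then there is `C ∈ ℂ` with `T f = C⟨f,φ⟩φ` for all `f`
(the pairing `⟨f,φ⟩` being linear in `f`, i.e. `inner φ f` in Mathlib's convention). -/
theorem simple_pole_residue_rank_one
    {H : Type*} [NormedAddCommGroup H] [InnerProductSpace ℂ H] [CompleteSpace H]
    (ω₀ : ℂ) (W : Set ℂ) (hW : W ∈ 𝓝 ω₀)
    (S : ℂ → H →L[ℂ] H) (hS : ∀ ω ∈ W, AnalyticAt ℂ S ω)
    (T : H →L[ℂ] H) (Q : ℂ → H →L[ℂ] H) (hQ : ∀ ω ∈ W, AnalyticAt ℂ Q ω)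
    (hinv : ∀ ω ∈ W, ω ≠ ω₀ →
      S ω * ((ω - ω₀)⁻¹ • T + Q ω) = 1 ∧ ((ω - ω₀)⁻¹ • T + Q ω) * S ω = 1) :
    (S ω₀ ∘L T = 0 ∧ T ∘L S ω₀ = 0 ∧
      LinearMap.range (T : H →ₗ[ℂ] H) ≤ LinearMap.ker (S ω₀ : H →ₗ[ℂ] H) ∧
      LinearMap.range (S ω₀ : H →ₗ[ℂ] H) ≤ LinearMap.ker (T : H →ₗ[ℂ] H)) ∧
    (∀ φ : H, φ ≠ 0 →
      LinearMap.ker (S ω₀ : H →ₗ[ℂ] H) = Submodule.span ℂ {φ} →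
      LinearMap.range (S ω₀ : H →ₗ[ℂ] H) = (Submodule.span ℂ {φ} : Submodule ℂ H)ᗮ →
      ∃ C : ℂ, ∀ f : H, T f = C • (inner ℂ φ f : ℂ) • φ) := by
  have hω₀W : ω₀ ∈ W := mem_of_mem_nhds hW
  -- continuity of S and Q at ω₀
  have hScont : ContinuousAt S ω₀ := (hS ω₀ hω₀W).continuousAt
  have hQcont : ContinuousAt Q ω₀ := (hQ ω₀ hω₀W).continuousAt
  -- the key limit argument for S ω₀ * T = 0
  have key : ∀ (G : ℂ → H →L[ℂ] H), ContinuousAt G ω₀ →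
      (∀ ω ∈ W, ω ≠ ω₀ → G ω = (ω - ω₀) • (1 : H →L[ℂ] H)) → G ω₀ = 0 := by
    intro G hG hGeq
    have h1 : Filter.Tendsto G (𝓝[≠] ω₀) (𝓝 (G ω₀)) :=
      hG.tendsto.mono_left nhdsWithin_le_nhds
    have h2 : Filter.Tendsto G (𝓝[≠] ω₀) (𝓝 (0 : H →L[ℂ] H)) := by
      have h0 : Filter.Tendsto (fun ω : ℂ => (ω - ω₀) • (1 : H →L[ℂ] H)) (𝓝[≠] ω₀)
          (𝓝 (0 : H →L[ℂ] H)) := by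
        have : Filter.Tendsto (fun ω : ℂ => (ω - ω₀) • (1 : H →L[ℂ] H)) (𝓝 ω₀)
            (𝓝 ((ω₀ - ω₀) • (1 : H →L[ℂ] H))) := by
          exact (Filter.Tendsto.sub_const Filter.tendsto_id ω₀).smul tendsto_const_nhds
        simpa using this.mono_left nhdsWithin_le_nhds
      refine h0.congr' ?_
      filter_upwards [self_mem_nhdsWithin,
        nhdsWithin_le_nhds (s := {ω₀}ᶜ) hW] with ω hω hωW
      exact (hGeq ω hωW hω).symm
    exact tendsto_nhds_unique h1 h2
  have hST : S ω₀ * T = 0 := by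
    have := key (fun ω => S ω * (T + (ω - ω₀) • Q ω)) ?_ ?_
    · simpa using this
    · exact hScont.mul (continuousAt_const.add
        (((continuousAt_id.sub continuousAt_const)).smul hQcont))
    · intro ω hωW hω
      have hsub : (ω - ω₀) ≠ 0 := sub_ne_zero.mpr hω
      have h := (hinv ω hωW hω).1
      have hrw : T + (ω - ω₀) • Q ω = (ω - ω₀) • ((ω - ω₀)⁻¹ • T + Q ω) := by
        rw [smul_add, smul_smul, mul_inv_cancel₀ hsub, one_smul]
      show S ω * (T + (ω - ω₀) • Q ω) = (ω - ω₀) • 1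
      rw [hrw, mul_smul_comm, h]
  have hTS : T * S ω₀ = 0 := by
    have := key (fun ω => (T + (ω - ω₀) • Q ω) * S ω) ?_ ?_
    · simpa using this
    · exact (continuousAt_const.add
        (((continuousAt_id.sub continuousAt_const)).smul hQcont)).mul hScont
    · intro ω hωW hω
      have hsub : (ω - ω₀) ≠ 0 := sub_ne_zero.mpr hω
      have h := (hinv ω hωW hω).2
      have hrw : T + (ω - ω₀) • Q ω = (ω - ω₀) • ((ω - ω₀)⁻¹ • T + Q ω) := by
        rw [smul_add, smul_smul, mul_inv_cancel₀ hsub, one_smul]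
      show (T + (ω - ω₀) • Q ω) * S ω = (ω - ω₀) • 1
      rw [hrw, smul_mul_assoc, h]
  have hST' : S ω₀ ∘L T = 0 := hST
  have hTS' : T ∘L S ω₀ = 0 := hTS
  have hrangeT : LinearMap.range (T : H →ₗ[ℂ] H) ≤ LinearMap.ker (S ω₀ : H →ₗ[ℂ] H) := by
    rintro x ⟨y, rfl⟩
    have : (S ω₀ ∘L T) y = 0 := by rw [hST']; rfl
    simpa using this
  have hrangeS : LinearMap.range (S ω₀ : H →ₗ[ℂ] H) ≤ LinearMap.ker (T : H →ₗ[ℂ] H) := by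
    rintro x ⟨y, rfl⟩
    have : (T ∘L S ω₀) y = 0 := by rw [hTS']; rfl
    simpa using this
  refine ⟨⟨hST', hTS', hrangeT, hrangeS⟩, ?_⟩
  intro φ hφ hker hrange
  set a : ℂ := inner ℂ φ φ with ha_def
  have ha : a ≠ 0 := by
    rw [ha_def]
    exact inner_self_ne_zero.mpr hφ
  -- T φ ∈ span {φ}
  have hTφ : T φ ∈ Submodule.span ℂ {φ} := by
    rw [← hker]
    exact hrangeT ⟨φ, rfl⟩
  obtain ⟨c₀, hc₀⟩ := Submodule.mem_span_singleton.mp hTφ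
  refine ⟨c₀ / a, fun f => ?_⟩
  -- decompose f
  set p : H := ((inner ℂ φ f : ℂ) / a) • φ with hp_def
  have hperp : f - p ∈ (Submodule.span ℂ {φ} : Submodule ℂ H)ᗮ := by
    intro u hu
    obtain ⟨d, rfl⟩ := Submodule.mem_span_singleton.mp hu
    rw [inner_smul_left, inner_sub_right, hp_def, inner_smul_right]
    rw [← ha_def, div_mul_cancel₀ _ ha, sub_self, mul_zero]
  have hTfp : T (f - p) = 0 := by
    rw [← hrange] at hperp
    exact hrangeS hperp
  have : T f = T p := by
    have h' := map_sub T f p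
    rw [hTfp] at h'
    exact sub_eq_zero.mp h'.symm
  calc T f = T p := this
    _ = ((inner ℂ φ f : ℂ) / a) • T φ := by rw [hp_def, map_smul]
    _ = ((inner ℂ φ f : ℂ) / a) • (c₀ • φ) := by rw [← hc₀]
    _ = (c₀ / a) • (inner ℂ φ f : ℂ) • φ := by
        rw [smul_smul, smul_smul]; ring_nf
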